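/- Let G be a semi-Markovian causal graph with observed variables V, and let X and Y be two disjoint subsets of V. The causal effect of X on Y is identifiable from G if and only if Q[Anc_Y(G_{V∖X})] is identifiable from G. -/

import Mathlib

open scoped Classical

/-- A semi-Markovian causal graph: a DAG over a finite vertex set partitioned into
observed (`obs`) and unobserved (`unobs`) variables, where every unobserved variable
has no parents and exactly two (distinct, observed) children. -/
structure CausalGraph (ν : Type) [Fintype ν] [DecidableEq ν] where
  obs : Finset ν
  unobs : Finset ν
  disj : Disjoint obs unobs
  E : ν → ν → Prop
  edge_mem : ∀ x y, E x y → x ∈ obs ∪ unobs ∧ y ∈ obs ∪ unobs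
  acyclic : ∀ x, ¬ Relation.TransGen E x x
  unobs_no_parent : ∀ u ∈ unobs, ∀ w, ¬ E w u
  unobs_two_children : ∀ u ∈ unobs,
    ∃ a b, a ≠ b ∧ a ∈ obs ∧ b ∈ obs ∧ (∀ w, E u w ↔ w = a ∨ w = b)

namespace CausalGraph

variable {ν : Type} [Fintype ν] [DecidableEq ν]

def verts (G : CausalGraph ν) : Finset ν := G.obs ∪ G.unobs

/-- A structural equation model over the causal graph `G`: finite nonempty domains
(encoded as finite sets of naturals), a pmf for each unobserved variable, and a
conditional pmf (given an assignment to the parents) for each observed variable. -/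
structure SEM (G : CausalGraph ν) where
  dom : ν → Finset ℕ
  dom_ne : ∀ x, (dom x).Nonempty
  pU : ν → ℕ → ℝ
  pU_nonneg : ∀ u n, 0 ≤ pU u n
  pU_sum : ∀ u ∈ G.unobs, ∑ n ∈ dom u, pU u n = 1
  pO : ν → ℕ → (ν → ℕ) → ℝ
  pO_nonneg : ∀ x n pa, 0 ≤ pO x n pa
  pO_sum : ∀ x ∈ G.obs, ∀ pa : ν → ℕ, ∑ n ∈ dom x, pO x n pa = 1
  pO_par : ∀ x n (pa pa' : ν → ℕ), (∀ p, G.E p x → pa p = pa' p) → pO x n pa = pO x n pa'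

namespace SEM

variable {G : CausalGraph ν}

/-- Full assignments: all variables of `G` get values in their domains
(non-vertices are pinned to `0`). -/
noncomputable def fullAssign (M : SEM G) : Finset (ν → ℕ) :=
  Fintype.piFinset (fun x => if x ∈ G.verts then M.dom x else {0})

/-- Observed assignments `dom(V)`: observed variables get values in their domains
(all other coordinates are pinned to `0`). -/
noncomputable def obsAssign (M : SEM G) : Finset (ν → ℕ) :=
  Fintype.piFinset (fun x => if x ∈ G.obs then M.dom x else {0})

/-- `Q^M[S](v) = Σ_u Π_{X ∈ S} P(x | pa_G(X)) Π_{U} P(u)`. -/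
noncomputable def Q (M : SEM G) (S : Finset ν) (v : ν → ℕ) : ℝ :=
  ∑ w ∈ M.fullAssign.filter (fun w => ∀ x ∈ G.obs, w x = v x),
    (∏ x ∈ S, M.pO x (w x) w) * ∏ u ∈ G.unobs, M.pU u (w u)

/-- The observational distribution `P^M(v) = Q^M[V](v)`. -/
noncomputable def P (M : SEM G) (v : ν → ℕ) : ℝ := M.Q G.obs v

/-- Post-interventional probability `P^M_x(y)`: sum of `Q^M[V∖X]` over all observed
realizations consistent with `x` on `X` and `y` on `Y`. -/
noncomputable def Px (M : SEM G) (X : Finset ν) (x : ν → ℕ) (Y : Finset ν) (y : ν → ℕ) : ℝ :=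
  ∑ v ∈ M.obsAssign.filter (fun v => (∀ i ∈ X, v i = x i) ∧ (∀ i ∈ Y, v i = y i)),
    M.Q (G.obs \ X) v

/-- `M ∈ 𝕄⁺(G)`: strictly positive observational distribution. -/
def positive (M : SEM G) : Prop := ∀ v ∈ M.obsAssign, 0 < M.P v

end SEM

/-- The causal effect of `X` on `Y` is identifiable from `G`. -/
def Identifiable (G : CausalGraph ν) (X Y : Finset ν) : Prop :=
  ∀ M₁ M₂ : SEM G, M₁.positive → M₂.positive →
    (∀ i ∈ G.obs, M₁.dom i = M₂.dom i) →
    (∀ v ∈ M₁.obsAssign, M₁.P v = M₂.P v) →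
    ∀ x y : ν → ℕ, (∀ i ∈ X, x i ∈ M₁.dom i) → (∀ i ∈ Y, y i ∈ M₁.dom i) →
      M₁.Px X x Y y = M₂.Px X x Y y

/-- `Q[S]` is identifiable from `G`. -/
def QIdentifiable (G : CausalGraph ν) (S : Finset ν) : Prop :=
  Identifiable G (G.obs \ S) S

/-- The causal effect of `X` on `Y` is g-identifiable from `(𝔸, G)`. -/
def GIdentifiable (G : CausalGraph ν) (𝔸 : Finset (Finset ν)) (X Y : Finset ν) : Prop :=
  ∀ M₁ M₂ : SEM G, M₁.positive → M₂.positive →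
    (∀ i ∈ G.obs, M₁.dom i = M₂.dom i) →
    (∀ A ∈ 𝔸, ∀ v ∈ M₁.obsAssign, M₁.Q A v = M₂.Q A v) →
    ∀ x y : ν → ℕ, (∀ i ∈ X, x i ∈ M₁.dom i) → (∀ i ∈ Y, y i ∈ M₁.dom i) →
      M₁.Px X x Y y = M₂.Px X x Y y

/-- `Q[S]` is g-identifiable from `(𝔸, G)`. -/
def QGIdentifiable (G : CausalGraph ν) (𝔸 : Finset (Finset ν)) (S : Finset ν) : Prop :=
  GIdentifiable G 𝔸 (G.obs \ S) S

/-- Bidirected edge of `G_X` between `a` and `b`: distinct members of `X` sharing an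
unobserved parent (whose two children then necessarily both lie in `X`). -/
def biEdge (G : CausalGraph ν) (X : Finset ν) (a b : ν) : Prop :=
  a ≠ b ∧ a ∈ X ∧ b ∈ X ∧ ∃ u ∈ G.unobs, G.E u a ∧ G.E u b

/-- `X` is a single c-component of `G`. -/
def SingleC (G : CausalGraph ν) (X : Finset ν) : Prop :=
  X.Nonempty ∧ ∀ a ∈ X, ∀ b ∈ X, Relation.ReflTransGen (G.biEdge X) a b

/-- The c-components of `S`: connected components of the bidirected part of `G_S`. -/
noncomputable def cComponents (G : CausalGraph ν) (S : Finset ν) : Finset (Finset ν) :=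
  S.image (fun a => S.filter (fun b => Relation.ReflTransGen (G.biEdge S) a b))

/-- Directed edge of `G_X` (both endpoints in `X`). -/
def dirEdgeIn (G : CausalGraph ν) (X : Finset ν) (a b : ν) : Prop :=
  a ∈ X ∧ b ∈ X ∧ G.E a b

/-- `Anc_Y(G_X)`: members of `X` having a directed path in `G_X` to some member of `Y`. -/
noncomputable def ancIn (G : CausalGraph ν) (X Y : Finset ν) : Finset ν :=
  X.filter (fun a => ∃ y ∈ Y, Relation.ReflTransGen (G.dirEdgeIn X) a y)

/-- Unobserved vertices of the induced subgraph `G[A]`: unobserved vertices of `G`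
both of whose children lie in `A`. -/
noncomputable def inducedUnobs (G : CausalGraph ν) (A : Finset ν) : Finset ν :=
  G.unobs.filter (fun u => ∀ w, G.E u w → w ∈ A)

/-- The induced subgraph `G[A]`. -/
noncomputable def induced (G : CausalGraph ν) (A : Finset ν) : CausalGraph ν where
  obs := A ∩ G.obs
  unobs := G.inducedUnobs A
  disj := G.disj.mono Finset.inter_subset_right (Finset.filter_subset _ _)
  E x y := G.E x y ∧ x ∈ (A ∩ G.obs) ∪ G.inducedUnobs A ∧ y ∈ (A ∩ G.obs) ∪ G.inducedUnobs A
  edge_mem := fun x y h => ⟨h.2.1, h.2.2⟩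
  acyclic := fun x h => G.acyclic x (Relation.TransGen.mono (fun a b (hab : G.E a b ∧ _) => hab.1) x x h)
  unobs_no_parent := fun u hu w hw =>
    G.unobs_no_parent u (Finset.mem_filter.mp hu).1 w hw.1
  unobs_two_children := by
    intro u hu
    have hu' := Finset.mem_filter.mp hu
    obtain ⟨a, b, hab, ha, hb, hiff⟩ := G.unobs_two_children u hu'.1
    have hEa : G.E u a := (hiff a).mpr (Or.inl rfl)
    have hEb : G.E u b := (hiff b).mpr (Or.inr rfl)
    have haA : a ∈ A := hu'.2 a hEa
    have hbA : b ∈ A := hu'.2 b hEb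
    refine ⟨a, b, hab, Finset.mem_inter.mpr ⟨haA, ha⟩, Finset.mem_inter.mpr ⟨hbA, hb⟩, ?_⟩
    intro w
    constructor
    · intro hw; exact (hiff w).mp hw.1
    · rintro (rfl | rfl)
      · exact ⟨hEa, Finset.mem_union.mpr (Or.inr hu),
          Finset.mem_union.mpr (Or.inl (Finset.mem_inter.mpr ⟨haA, ha⟩))⟩
      · exact ⟨hEb, Finset.mem_union.mpr (Or.inr hu),
          Finset.mem_union.mpr (Or.inl (Finset.mem_inter.mpr ⟨hbA, hb⟩))⟩

/-- `H` is a subgraph of `G`. -/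
def IsSubgraph (H G : CausalGraph ν) : Prop :=
  H.obs ⊆ G.obs ∧ H.unobs ⊆ G.unobs ∧ ∀ a b, H.E a b → G.E a b

/-- `H` is an `R`-rooted c-forest: `R` is the root set of `H`, the observed vertex set of
`H` is a single c-component, and every observed vertex has at most one child in `H`. -/
def IsCForest (H : CausalGraph ν) (R : Finset ν) : Prop :=
  H.obs.filter (fun x => ∀ w, ¬ H.E x w) = R ∧
  H.SingleC H.obs ∧
  ∀ x ∈ H.obs, ∀ w w', H.E x w → H.E x w' → w = w'

end CausalGraph

namespace CGaux


/-- noisy copy channel -/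
noncomputable def Kmat (D : Finset ℕ) (γ' γ : ℕ) : ℝ :=
  if γ' ∈ D then (if γ = γ' then 2⁻¹ else 0) + (2 * (D.card : ℝ))⁻¹ else ((D.card : ℝ))⁻¹

lemma Kmat_pos {D : Finset ℕ} (hD : D.Nonempty) (γ' γ : ℕ) : 0 < Kmat D γ' γ := by
  have hm : (0:ℝ) < (D.card : ℝ) := by
    exact_mod_cast Finset.card_pos.mpr hD
  unfold Kmat
  split_ifs <;> positivity

lemma Kmat_sum {D : Finset ℕ} (hD : D.Nonempty) (γ' : ℕ) : ∑ γ ∈ D, Kmat D γ' γ = 1 := by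
  have hm : (0:ℝ) < (D.card : ℝ) := by exact_mod_cast Finset.card_pos.mpr hD
  unfold Kmat
  by_cases h : γ' ∈ D
  · simp only [h, if_true]
    rw [Finset.sum_add_distrib, Finset.sum_const, Finset.sum_ite_eq' D γ' (fun _ => (2:ℝ)⁻¹)]
    simp only [h, if_true, nsmul_eq_mul]
    field_simp
    ring
  · simp only [h, if_false]
    rw [Finset.sum_const, nsmul_eq_mul]
    field_simp

lemma Kmat_decode {D : Finset ℕ} (hD : D.Nonempty) (u₁ u₂ : ℕ → ℝ)
    (h : ∀ γ ∈ D, ∑ γ' ∈ D, Kmat D γ' γ * u₁ γ' = ∑ γ' ∈ D, Kmat D γ' γ * u₂ γ') :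
    ∀ γ ∈ D, u₁ γ = u₂ γ := by
  have hm : (0:ℝ) < (D.card : ℝ) := by exact_mod_cast Finset.card_pos.mpr hD
  set m : ℝ := (D.card : ℝ) with hmdef
  have key : ∀ (u : ℕ → ℝ), ∀ γ ∈ D,
      ∑ γ' ∈ D, Kmat D γ' γ * u γ' = 2⁻¹ * u γ + (2*m)⁻¹ * ∑ γ' ∈ D, u γ' := by
    intro u γ hγ
    have : ∀ γ' ∈ D, Kmat D γ' γ * u γ'
        = (if γ = γ' then 2⁻¹ * u γ' else 0) + (2*m)⁻¹ * u γ' := by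
      intro γ' hγ'
      unfold Kmat
      simp only [hγ', if_true]
      split_ifs <;> ring
    rw [Finset.sum_congr rfl this, Finset.sum_add_distrib,
      Finset.sum_ite_eq D γ (fun γ' => 2⁻¹ * u γ')]
    simp only [hγ, if_true, ← Finset.mul_sum]
  have h2 : ∀ γ ∈ D, 2⁻¹ * u₁ γ + (2*m)⁻¹ * ∑ γ' ∈ D, u₁ γ'
      = 2⁻¹ * u₂ γ + (2*m)⁻¹ * ∑ γ' ∈ D, u₂ γ' := by
    intro γ hγ
    have := h γ hγ
    rwa [key u₁ γ hγ, key u₂ γ hγ] at this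
  set s₁ := ∑ γ' ∈ D, u₁ γ' with hs₁
  set s₂ := ∑ γ' ∈ D, u₂ γ' with hs₂
  have hdiff : ∀ γ ∈ D, u₁ γ - u₂ γ = 2*(2*m)⁻¹*(s₂ - s₁) := by
    intro γ hγ
    have := h2 γ hγ
    linarith
  have hsumdiff : s₁ - s₂ = (D.card : ℝ) * (2*(2*m)⁻¹*(s₂ - s₁)) := by
    rw [hs₁, hs₂, ← Finset.sum_sub_distrib, Finset.sum_congr rfl hdiff, Finset.sum_const,
      nsmul_eq_mul]
  have hone : (D.card : ℝ) * (2*(2*m)⁻¹) = 1 := by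
    rw [hmdef]
    field_simp
  have hsum : s₁ = s₂ := by nlinarith [hsumdiff, hone]
  intro γ hγ
  have := h2 γ hγ
  rw [hsum] at this
  linarith



lemma exists_no_child {α : Type} [DecidableEq α] {E : α → α → Prop}
    (hac : ∀ x, ¬ Relation.TransGen E x x) :
    ∀ R : Finset α, R.Nonempty → ∃ m ∈ R, ∀ s, E m s → s ∉ R := by
  intro R
  induction R using Finset.strongInductionOn with
  | _ R ih =>
    intro hR
    obtain ⟨a, ha⟩ := hR
    by_cases hA : ∀ s, E a s → s ∉ R
    · exact ⟨a, ha, hA⟩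
    · push_neg at hA
      obtain ⟨a₁, hE, ha₁⟩ := hA
      set R₁ := R.filter (fun r => Relation.TransGen E a r) with hR₁
      have hsub : R₁ ⊂ R := by
        refine ⟨Finset.filter_subset _ _, ?_⟩
        intro hsub'
        have : a ∈ R₁ := hsub' ha
        exact hac a ((Finset.mem_filter.mp this).2)
      have hne : R₁.Nonempty := ⟨a₁, Finset.mem_filter.mpr ⟨ha₁, .single hE⟩⟩
      obtain ⟨m, hm, hmax⟩ := ih R₁ hsub hne
      refine ⟨m, (Finset.mem_filter.mp hm).1, ?_⟩
      intro s hEs hsR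
      exact hmax s hEs (Finset.mem_filter.mpr ⟨hsR, ((Finset.mem_filter.mp hm).2).tail hEs⟩)

lemma exists_boundary {α : Type} {Rel : α → α → Prop} {Y' : Finset α} {a y : α}
    (hpath : Relation.ReflTransGen Rel a y) (hy : y ∈ Y') (ha : a ∉ Y') :
    ∃ c b, c ∉ Y' ∧ b ∈ Y' ∧ Rel c b ∧ Relation.ReflTransGen Rel a c := by
  revert ha
  induction hpath using Relation.ReflTransGen.head_induction_on with
  | refl => exact fun ha => absurd hy ha
  | @head a' a₁ h' hrest ih =>
    intro ha
    by_cases h₁ : a₁ ∈ Y'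
    · exact ⟨a', a₁, ha, h₁, h', .refl⟩
    · obtain ⟨c, b, hc, hb, hcb, hp⟩ := ih h₁
      exact ⟨c, b, hc, hb, hcb, hp.head h'⟩

lemma sum_piFinset_split {α : Type} [Fintype α] [DecidableEq α]
    (B : α → Finset ℕ) (m : α) (e : ℕ) (f : (α → ℕ) → ℝ) :
    ∑ v ∈ Fintype.piFinset B, f v
      = ∑ v ∈ Fintype.piFinset (Function.update B m {e}), ∑ c ∈ B m, f (Function.update v m c) := by
  rw [← Finset.sum_product']
  refine Finset.sum_nbij' (i := fun w => (Function.update w m e, w m))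
    (j := fun p => Function.update p.1 m p.2) ?_ ?_ ?_ ?_ ?_
  · intro w hw
    rw [Fintype.mem_piFinset] at hw
    refine Finset.mem_product.mpr ⟨?_, hw m⟩
    rw [Fintype.mem_piFinset]
    intro a
    by_cases hla : a = m
    · subst hla; simp
    · rw [Function.update_of_ne hla]
      show Function.update w m e a ∈ B a
      rw [Function.update_of_ne hla]
      exact hw a
  · intro p hp
    rw [Finset.mem_product] at hp
    rw [Fintype.mem_piFinset]
    intro a
    by_cases hla : a = m
    · subst hla; simpa using hp.2
    · show Function.update p.1 m p.2 a ∈ B a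
      rw [Function.update_of_ne hla]
      have := (Fintype.mem_piFinset.mp hp.1) a
      rwa [Function.update_of_ne hla] at this
  · intro w hw
    simp only [Function.update_idem, Function.update_self]
    exact Function.update_eq_self m w
  · intro p hp
    rw [Finset.mem_product] at hp
    have h1 : p.1 m = e := by
      have := (Fintype.mem_piFinset.mp hp.1) m
      simpa using this
    simp only [Function.update_self, Function.update_idem]
    rw [← h1]
    exact Prod.ext (Function.update_eq_self m p.1) rfl
  · intro w hw
    simp only [Function.update_self]
    rw [Function.update_idem]
    rw [Function.update_eq_self m w]

lemma sum_piFinset_singleton {α : Type} [Fintype α] [DecidableEq α] (h : α → ℕ)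
    (f : (α → ℕ) → ℝ) :
    ∑ v ∈ Fintype.piFinset (fun i => ({h i} : Finset ℕ)), f v = f h := by
  have : Fintype.piFinset (fun i => ({h i} : Finset ℕ)) = {h} := by
    ext v
    simp [Fintype.mem_piFinset, funext_iff]
  rw [this, Finset.sum_singleton]

end CGaux

section Machinery

open CGaux

namespace CausalGraph

variable {ν : Type} [Fintype ν] [DecidableEq ν] {G : CausalGraph ν}

def mergeU (G : CausalGraph ν) (v g : ν → ℕ) : ν → ℕ :=
  fun i => if i ∈ G.unobs then g i else v i

lemma obs_not_unobs {i : ν} (hi : i ∈ G.obs) : i ∉ G.unobs :=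
  Finset.disjoint_left.mp G.disj hi

namespace SEM

noncomputable def uAssign (M : SEM G) : Finset (ν → ℕ) :=
  Fintype.piFinset (fun x => if x ∈ G.unobs then M.dom x else {0})

lemma mem_obsAssign_iff {M : SEM G} {v : ν → ℕ} :
    v ∈ M.obsAssign ↔ (∀ i ∈ G.obs, v i ∈ M.dom i) ∧ ∀ i ∉ G.obs, v i = 0 := by
  simp only [obsAssign, Fintype.mem_piFinset]
  constructor
  · intro h
    constructor
    · intro i hi; have := h i; rwa [if_pos hi] at this
    · intro i hi; have := h i; rw [if_neg hi] at this; simpa using this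
  · rintro ⟨h1, h2⟩ i
    by_cases hi : i ∈ G.obs
    · rw [if_pos hi]; exact h1 i hi
    · rw [if_neg hi]; simp [h2 i hi]

lemma obsAssign_eq {M₁ M₂ : SEM G} (h : ∀ i ∈ G.obs, M₁.dom i = M₂.dom i) :
    M₁.obsAssign = M₂.obsAssign := by
  unfold obsAssign
  congr 1
  funext i
  by_cases hi : i ∈ G.obs
  · rw [if_pos hi, if_pos hi, h i hi]
  · rw [if_neg hi, if_neg hi]

lemma mem_fullAssign_iff {M : SEM G} {w : ν → ℕ} :
    w ∈ M.fullAssign ↔ (∀ i ∈ G.obs, w i ∈ M.dom i) ∧ (∀ i ∈ G.unobs, w i ∈ M.dom i) ∧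
      ∀ i, i ∉ G.obs → i ∉ G.unobs → w i = 0 := by
  simp only [fullAssign, Fintype.mem_piFinset, verts, Finset.mem_union]
  constructor
  · intro h
    refine ⟨fun i hi => ?_, fun i hi => ?_, fun i h1 h2 => ?_⟩
    · have := h i; rwa [if_pos (Or.inl hi)] at this
    · have := h i; rwa [if_pos (Or.inr hi)] at this
    · have := h i; rw [if_neg (by tauto)] at this; simpa using this
  · rintro ⟨h1, h2, h3⟩ i
    by_cases hio : i ∈ G.obs
    · rw [if_pos (Or.inl hio)]; exact h1 i hio
    · by_cases hiu : i ∈ G.unobs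
      · rw [if_pos (Or.inr hiu)]; exact h2 i hiu
      · rw [if_neg (by tauto)]; simp [h3 i hio hiu]

lemma mem_uAssign_iff {M : SEM G} {g : ν → ℕ} :
    g ∈ M.uAssign ↔ (∀ i ∈ G.unobs, g i ∈ M.dom i) ∧ ∀ i ∉ G.unobs, g i = 0 := by
  simp only [uAssign, Fintype.mem_piFinset]
  constructor
  · intro h
    constructor
    · intro i hi; have := h i; rwa [if_pos hi] at this
    · intro i hi; have := h i; rw [if_neg hi] at this; simpa using this
  · rintro ⟨h1, h2⟩ i
    by_cases hi : i ∈ G.unobs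
    · rw [if_pos hi]; exact h1 i hi
    · rw [if_neg hi]; simp [h2 i hi]

lemma Q_repr (M : SEM G) {S : Finset ν} (hS : S ⊆ G.obs) {v : ν → ℕ} (hv : v ∈ M.obsAssign) :
    M.Q S v = ∑ g ∈ M.uAssign,
      (∏ x ∈ S, M.pO x (v x) (G.mergeU v g)) * ∏ u ∈ G.unobs, M.pU u (g u) := by
  have hv' := mem_obsAssign_iff.mp hv
  have hmergekey : ∀ w, w ∈ M.fullAssign → (∀ x ∈ G.obs, w x = v x) →
      G.mergeU v (fun j => if j ∈ G.unobs then w j else 0) = w := by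
    intro w hwf hwv
    have hw' := mem_fullAssign_iff.mp hwf
    funext j
    simp only [mergeU]
    by_cases hj : j ∈ G.unobs
    · rw [if_pos hj, if_pos hj]
    · rw [if_neg hj]
      by_cases hjo : j ∈ G.obs
      · exact (hwv j hjo).symm
      · rw [hv'.2 j hjo, hw'.2.2 j hjo hj]
  unfold Q
  refine Finset.sum_nbij' (i := fun w => fun j => if j ∈ G.unobs then w j else 0)
    (j := fun g => G.mergeU v g) ?_ ?_ ?_ ?_ ?_
  · intro w hw
    rw [Finset.mem_filter] at hw
    have hw' := mem_fullAssign_iff.mp hw.1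
    rw [mem_uAssign_iff]
    constructor
    · intro i hi
      show (if i ∈ G.unobs then w i else 0) ∈ M.dom i
      rw [if_pos hi]; exact hw'.2.1 i hi
    · intro i hi
      show (if i ∈ G.unobs then w i else 0) = 0
      rw [if_neg hi]
  · intro g hg
    have hg' := mem_uAssign_iff.mp hg
    rw [Finset.mem_filter]
    refine ⟨mem_fullAssign_iff.mpr ⟨?_, ?_, ?_⟩, ?_⟩
    · intro i hi
      simp only [mergeU]
      rw [if_neg (obs_not_unobs hi)]
      exact hv'.1 i hi
    · intro i hi
      simp only [mergeU]
      rw [if_pos hi]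
      exact hg'.1 i hi
    · intro i h1 h2
      simp only [mergeU]
      rw [if_neg h2]
      exact hv'.2 i h1
    · intro x hx
      simp only [mergeU]
      rw [if_neg (obs_not_unobs hx)]
  · intro w hw
    rw [Finset.mem_filter] at hw
    exact hmergekey w hw.1 hw.2
  · intro g hg
    have hg' := mem_uAssign_iff.mp hg
    funext j
    by_cases hj : j ∈ G.unobs
    · simp only [mergeU]
      rw [if_pos hj, if_pos hj]
    · simp only [mergeU]
      rw [if_neg hj, hg'.2 j hj]
  · intro w hw
    rw [Finset.mem_filter] at hw
    dsimp only
    rw [hmergekey w hw.1 hw.2]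
    congr 1
    · refine Finset.prod_congr rfl fun x hx => ?_
      rw [hw.2 x (hS hx)]
    · refine Finset.prod_congr rfl fun u hu => ?_
      rw [if_pos hu]

lemma Q_congr (M : SEM G) {S : Finset ν} (hS : S ⊆ G.obs) {v v' : ν → ℕ}
    (hv : v ∈ M.obsAssign) (hv' : v' ∈ M.obsAssign)
    (h1 : ∀ i ∈ S, v i = v' i)
    (h2 : ∀ p ∈ G.obs, (∃ s ∈ S, G.E p s) → v p = v' p) :
    M.Q S v = M.Q S v' := by
  rw [Q_repr M hS hv, Q_repr M hS hv']
  refine Finset.sum_congr rfl fun g hg => ?_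
  congr 1
  refine Finset.prod_congr rfl fun x hx => ?_
  rw [h1 x hx]
  refine M.pO_par x (v' x) _ _ fun p hp => ?_
  simp only [mergeU]
  by_cases hpu : p ∈ G.unobs
  · rw [if_pos hpu, if_pos hpu]
  · rw [if_neg hpu, if_neg hpu]
    have hpobs : p ∈ G.obs := by
      have := (G.edge_mem p x hp).1
      rw [Finset.mem_union] at this
      tauto
    exact h2 p hpobs ⟨x, hx, hp⟩

lemma update_mem_obsAssign {M : SEM G} {v : ν → ℕ} (hv : v ∈ M.obsAssign) {m : ν}
    (hm : m ∈ G.obs) {c : ℕ} (hc : c ∈ M.dom m) : Function.update v m c ∈ M.obsAssign := by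
  rw [mem_obsAssign_iff] at hv ⊢
  constructor
  · intro i hi
    by_cases him : i = m
    · subst him; rw [Function.update_self]; exact hc
    · rw [Function.update_of_ne him]; exact hv.1 i hi
  · intro i hi
    have him : i ≠ m := fun h => hi (h ▸ hm)
    rw [Function.update_of_ne him]; exact hv.2 i hi

lemma sum_dom_Q_erase (M : SEM G) {S : Finset ν} (hS : S ⊆ G.obs) {m : ν} (hm : m ∈ S)
    (hnc : ∀ s, G.E m s → s ∉ S) {v : ν → ℕ} (hv : v ∈ M.obsAssign) :
    ∑ c ∈ M.dom m, M.Q S (Function.update v m c) = M.Q (S.erase m) v := by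
  have hmobs : m ∈ G.obs := hS hm
  have hmerge : ∀ (c : ℕ) (g : ν → ℕ),
      G.mergeU (Function.update v m c) g = Function.update (G.mergeU v g) m c := by
    intro c g
    funext j
    simp only [mergeU]
    by_cases hjm : j = m
    · subst hjm
      rw [if_neg (obs_not_unobs hmobs), Function.update_self, Function.update_self]
    · rw [Function.update_of_ne hjm]
      by_cases hj : j ∈ G.unobs
      · rw [if_pos hj]
        show g j = Function.update (fun i => if i ∈ G.unobs then g i else v i) m c j
        rw [Function.update_of_ne hjm, if_pos hj]
      · rw [if_neg hj]
        show v j = Function.update (fun i => if i ∈ G.unobs then g i else v i) m c j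
        rw [Function.update_of_ne hjm, if_neg hj]
  have hEm : ∀ p, G.E p m → p ≠ m := by
    intro p hp h
    subst h
    exact G.acyclic p (Relation.TransGen.single hp)
  calc ∑ c ∈ M.dom m, M.Q S (Function.update v m c)
      = ∑ c ∈ M.dom m, ∑ g ∈ M.uAssign,
          M.pO m c (G.mergeU v g) *
            ((∏ x ∈ S.erase m, M.pO x (v x) (G.mergeU v g)) * ∏ u ∈ G.unobs, M.pU u (g u)) := by
        refine Finset.sum_congr rfl fun c hc => ?_
        rw [Q_repr M hS (update_mem_obsAssign hv hmobs hc)]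
        refine Finset.sum_congr rfl fun g hg => ?_
        rw [hmerge c g, ← mul_assoc]
        congr 1
        rw [← Finset.mul_prod_erase S _ hm]
        congr 1
        · rw [Function.update_self]
          refine M.pO_par m c _ _ fun p hp => ?_
          rw [Function.update_of_ne (hEm p hp)]
        · refine Finset.prod_congr rfl fun x hx => ?_
          rw [Function.update_of_ne (Finset.ne_of_mem_erase hx)]
          refine M.pO_par x (v x) _ _ fun p hp => ?_
          have hpm : p ≠ m := by
            intro h; subst h
            exact hnc x hp (Finset.mem_of_mem_erase hx)
          rw [Function.update_of_ne hpm]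
    _ = ∑ g ∈ M.uAssign, (∑ c ∈ M.dom m, M.pO m c (G.mergeU v g)) *
          ((∏ x ∈ S.erase m, M.pO x (v x) (G.mergeU v g)) * ∏ u ∈ G.unobs, M.pU u (g u)) := by
        rw [Finset.sum_comm]
        exact Finset.sum_congr rfl fun g hg => (Finset.sum_mul _ _ _).symm
    _ = M.Q (S.erase m) v := by
        rw [Q_repr M (fun a ha => hS (Finset.mem_of_mem_erase ha)) hv]
        refine Finset.sum_congr rfl fun g hg => ?_
        rw [M.pO_sum m hmobs, one_mul]

noncomputable def pinFam (M : SEM G) (P : Finset ν) (z : ν → ℕ) : ν → Finset ℕ :=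
  fun i => if i ∈ P then {z i} else if i ∈ G.obs then M.dom i else {0}

lemma pinFam_mem_obsAssign {M : SEM G} {P : Finset ν} (hP : P ⊆ G.obs) {z : ν → ℕ}
    (hz : ∀ i ∈ G.obs, z i ∈ M.dom i) {v : ν → ℕ}
    (hv : v ∈ Fintype.piFinset (M.pinFam P z)) : v ∈ M.obsAssign := by
  have h := Fintype.mem_piFinset.mp hv
  rw [mem_obsAssign_iff]
  constructor
  · intro i hi
    have := h i
    unfold pinFam at this
    by_cases hip : i ∈ P
    · rw [if_pos hip] at this
      rw [Finset.mem_singleton] at this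
      rw [this]; exact hz i hi
    · rwa [if_neg hip, if_pos hi] at this
  · intro i hi
    have := h i
    unfold pinFam at this
    rw [if_neg (fun hip => hi (hP hip)), if_neg hi] at this
    simpa using this

lemma filter_pin_eq (M : SEM G) {P : Finset ν} (hP : P ⊆ G.obs) {z : ν → ℕ}
    (hz : ∀ i ∈ G.obs, z i ∈ M.dom i) :
    M.obsAssign.filter (fun v => ∀ i ∈ P, v i = z i) = Fintype.piFinset (M.pinFam P z) := by
  ext v
  rw [Finset.mem_filter, Fintype.mem_piFinset, mem_obsAssign_iff]
  constructor
  · rintro ⟨⟨h1, h2⟩, h3⟩ i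
    unfold pinFam
    by_cases hip : i ∈ P
    · rw [if_pos hip, Finset.mem_singleton]; exact h3 i hip
    · rw [if_neg hip]
      by_cases hio : i ∈ G.obs
      · rw [if_pos hio]; exact h1 i hio
      · rw [if_neg hio]; simp [h2 i hio]
  · intro h
    refine ⟨⟨?_, ?_⟩, ?_⟩
    · intro i hi
      have := h i
      unfold pinFam at this
      by_cases hip : i ∈ P
      · rw [if_pos hip, Finset.mem_singleton] at this
        rw [this]; exact hz i hi
      · rwa [if_neg hip, if_pos hi] at this
    · intro i hi
      have := h i
      unfold pinFam at this
      rw [if_neg (fun hip => hi (hP hip)), if_neg hi] at this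
      simpa using this
    · intro i hip
      have := h i
      unfold pinFam at this
      rw [if_pos hip, Finset.mem_singleton] at this
      exact this

lemma collapse (M : SEM G) {z : ν → ℕ} (hz : ∀ i ∈ G.obs, z i ∈ M.dom i) :
    ∀ (n : ℕ) (R S' P : Finset ν), R.card = n → S' ⊆ G.obs → P ⊆ G.obs → R ⊆ S' →
      Disjoint R P → (∀ m ∈ R, ∀ s ∈ S', G.E m s → s ∈ R) →
      ∑ v ∈ Fintype.piFinset (M.pinFam P z), M.Q S' v
        = ∑ v ∈ Fintype.piFinset (M.pinFam (P ∪ R) z), M.Q (S' \ R) v := by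
  intro n
  induction n with
  | zero =>
    intro R S' P hcard hS' hP hRS hdisj hclo
    have hR : R = ∅ := Finset.card_eq_zero.mp hcard
    subst hR
    rw [Finset.union_empty, Finset.sdiff_empty]
  | succ k ih =>
    intro R S' P hcard hS' hP hRS hdisj hclo
    have hne : R.Nonempty := by
      rw [← Finset.card_pos, hcard]; omega
    obtain ⟨m, hmR, hmax⟩ := exists_no_child G.acyclic R hne
    have hmS : m ∈ S' := hRS hmR
    have hmobs : m ∈ G.obs := hS' hmS
    have hmP : m ∉ P := Finset.disjoint_left.mp hdisj hmR
    have hnc : ∀ s, G.E m s → s ∉ S' := fun s hEs hsS => hmax s hEs (hclo m hmR s hsS hEs)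
    have hBm : M.pinFam P z m = M.dom m := by simp [pinFam, hmP, hmobs]
    have hupd : Function.update (M.pinFam P z) m {z m} = M.pinFam (P ∪ {m}) z := by
      funext i
      by_cases him : i = m
      · subst him
        rw [Function.update_self]
        simp [pinFam]
      · rw [Function.update_of_ne him]
        have : i ∈ P ∪ {m} ↔ i ∈ P := by simp [him]
        simp only [pinFam, this]
    rw [sum_piFinset_split (M.pinFam P z) m (z m) (fun v => M.Q S' v), hBm, hupd]
    have hstep : ∀ v ∈ Fintype.piFinset (M.pinFam (P ∪ {m}) z),
        ∑ c ∈ M.dom m, M.Q S' (Function.update v m c) = M.Q (S'.erase m) v := by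
      intro v hv
      exact sum_dom_Q_erase M hS' hmS hnc
        (pinFam_mem_obsAssign (Finset.union_subset hP (by simpa using hmobs)) hz hv)
    rw [Finset.sum_congr rfl hstep]
    have hcard' : (R.erase m).card = k := by
      rw [Finset.card_erase_of_mem hmR, hcard]
      omega
    have hPR : (P ∪ {m}) ∪ R.erase m = P ∪ R := by
      ext a
      simp only [Finset.mem_union, Finset.mem_singleton, Finset.mem_erase]
      constructor
      · rintro ((h | rfl) | ⟨-, h⟩)
        exacts [Or.inl h, Or.inr hmR, Or.inr h]
      · rintro (h | h)
        · exact Or.inl (Or.inl h)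
        · by_cases ham : a = m
          · exact Or.inl (Or.inr ham)
          · exact Or.inr ⟨ham, h⟩
    have hSR : (S'.erase m) \ (R.erase m) = S' \ R := by
      ext a
      simp only [Finset.mem_sdiff, Finset.mem_erase]
      constructor
      · rintro ⟨⟨ham, haS⟩, h⟩
        exact ⟨haS, fun haR => h ⟨ham, haR⟩⟩
      · rintro ⟨haS, haR⟩
        have ham : a ≠ m := fun e => haR (e ▸ hmR)
        exact ⟨⟨ham, haS⟩, fun h2 => haR h2.2⟩
    have := ih (R.erase m) (S'.erase m) (P ∪ {m}) hcard'
      (fun a ha => hS' (Finset.mem_of_mem_erase ha))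
      (Finset.union_subset hP (by simpa using hmobs))
      (fun a ha => Finset.mem_erase.mpr ⟨(Finset.mem_erase.mp ha).1, hRS (Finset.mem_of_mem_erase ha)⟩)
      (Finset.disjoint_left.mpr (fun a ha => by
        have h1 : a ∉ P := Finset.disjoint_left.mp hdisj (Finset.mem_of_mem_erase ha)
        have h2 : a ≠ m := (Finset.mem_erase.mp ha).1
        simp [h1, h2]))
      (fun m' hm' s hs hE => Finset.mem_erase.mpr
        ⟨(Finset.mem_erase.mp hs).1, hclo m' (Finset.mem_of_mem_erase hm') s (Finset.mem_of_mem_erase hs) hE⟩)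
    rw [this, hPR, hSR]

lemma Px_congr (M : SEM G) {X Y : Finset ν} {x y x' y' : ν → ℕ}
    (hx : ∀ i ∈ X, x i = x' i) (hy : ∀ i ∈ Y, y i = y' i) :
    M.Px X x Y y = M.Px X x' Y y' := by
  unfold Px
  congr 1
  refine Finset.filter_congr fun v hv => ?_
  constructor
  · rintro ⟨h1, h2⟩
    exact ⟨fun i hi => (h1 i hi).trans (hx i hi), fun i hi => (h2 i hi).trans (hy i hi)⟩
  · rintro ⟨h1, h2⟩
    exact ⟨fun i hi => (h1 i hi).trans (hx i hi).symm, fun i hi => (h2 i hi).trans (hy i hi).symm⟩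

lemma Px_eq_sum_Q (M : SEM G) {X Y T : Finset ν} (hX : X ⊆ G.obs) (hYT : Y ⊆ T)
    (hT : T ⊆ G.obs \ X)
    (hanc : ∀ p ∈ G.obs \ X, ∀ s ∈ T, G.E p s → p ∈ T)
    {z : ν → ℕ} (hz : ∀ i ∈ G.obs, z i ∈ M.dom i) :
    M.Px X z Y z
      = ∑ v ∈ Fintype.piFinset (M.pinFam ((X ∪ Y) ∪ ((G.obs \ X) \ T)) z), M.Q T v := by
  have hYobs : Y ⊆ G.obs := fun a ha => (Finset.mem_sdiff.mp (hT (hYT ha))).1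
  unfold Px
  have h1 : M.obsAssign.filter (fun v => (∀ i ∈ X, v i = z i) ∧ (∀ i ∈ Y, v i = z i))
      = M.obsAssign.filter (fun v => ∀ i ∈ X ∪ Y, v i = z i) := by
    refine (Finset.filter_congr fun v hv => ?_).symm
    exact Finset.forall_mem_union
  rw [h1, filter_pin_eq M (Finset.union_subset hX hYobs) hz]
  have hcoll := collapse M hz ((G.obs \ X) \ T).card ((G.obs \ X) \ T) (G.obs \ X) (X ∪ Y) rfl
    Finset.sdiff_subset (Finset.union_subset hX hYobs) Finset.sdiff_subset
    (Finset.disjoint_left.mpr (fun a ha => by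
      have h2 := Finset.mem_sdiff.mp ha
      have h3 := Finset.mem_sdiff.mp h2.1
      simp only [Finset.mem_union]
      push_neg
      exact ⟨h3.2, fun hY => h2.2 (hYT hY)⟩))
    (fun m hm s hs hE => by
      have h2 := Finset.mem_sdiff.mp hm
      refine Finset.mem_sdiff.mpr ⟨hs, fun hsT => h2.2 (hanc m h2.1 s hsT hE)⟩)
  rw [hcoll]
  have hTT : (G.obs \ X) \ ((G.obs \ X) \ T) = T := by
    rw [Finset.sdiff_sdiff_self_left]
    exact Finset.inter_eq_right.mpr hT
  rw [hTT]

lemma Px_self (M : SEM G) {A : Finset ν} (hA : A ⊆ G.obs) {v : ν → ℕ} (hv : v ∈ M.obsAssign) :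
    M.Px (G.obs \ A) v A v = M.Q A v := by
  unfold Px
  have hobsA : G.obs \ (G.obs \ A) = A := by
    rw [Finset.sdiff_sdiff_self_left]
    exact Finset.inter_eq_right.mpr hA
  rw [hobsA]
  have hfilter : M.obsAssign.filter
      (fun u => (∀ i ∈ G.obs \ A, u i = v i) ∧ (∀ i ∈ A, u i = v i)) = {v} := by
    ext u
    rw [Finset.mem_filter, Finset.mem_singleton]
    constructor
    · rintro ⟨hu, h1, h2⟩
      funext i
      by_cases hio : i ∈ G.obs
      · by_cases hiA : i ∈ A
        · exact h2 i hiA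
        · exact h1 i (Finset.mem_sdiff.mpr ⟨hio, hiA⟩)
      · rw [(mem_obsAssign_iff.mp hu).2 i hio, (mem_obsAssign_iff.mp hv).2 i hio]
    · rintro rfl
      exact ⟨hv, fun i _ => rfl, fun i _ => rfl⟩
  rw [hfilter, Finset.sum_singleton]

end SEM

section AncFacts

variable {X Y : Finset ν}

lemma subset_ancIn' (hY : Y ⊆ G.obs \ X) : Y ⊆ G.ancIn (G.obs \ X) Y :=
  fun y hy => Finset.mem_filter.mpr ⟨hY hy, ⟨y, hy, Relation.ReflTransGen.refl⟩⟩

lemma ancIn_subset' : G.ancIn (G.obs \ X) Y ⊆ G.obs \ X := Finset.filter_subset _ _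

lemma ancIn_closed' : ∀ p ∈ G.obs \ X, ∀ s ∈ G.ancIn (G.obs \ X) Y, G.E p s →
    p ∈ G.ancIn (G.obs \ X) Y := by
  intro p hp s hs hE
  obtain ⟨hsS, y, hy, hpath⟩ := Finset.mem_filter.mp hs
  exact Finset.mem_filter.mpr ⟨hp, y, hy, Relation.ReflTransGen.head ⟨hp, hsS, hE⟩ hpath⟩

end AncFacts
namespace SEM
section Pipe

lemma ne_of_edge {a b : ν} (h : G.E a b) : a ≠ b := by
  intro e
  exact G.acyclic b (Relation.TransGen.single (e ▸ h))

/-- The pipe transformation: variable `b` (observed, child of `c`) is enlarged to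
also carry a noisy copy of the value of its parent `c`. -/
noncomputable def pipe (M : SEM G) (b c : ν) (hb : b ∈ G.obs) (hcb : G.E c b) : SEM G where
  dom := fun i => if i = b then (M.dom b ×ˢ M.dom c).image (fun p => Nat.pair p.1 p.2)
    else M.dom i
  dom_ne := by
    intro x
    split_ifs with h
    · exact ((M.dom_ne b).product (M.dom_ne c)).image _
    · exact M.dom_ne x
  pU := M.pU
  pU_nonneg := M.pU_nonneg
  pU_sum := by
    intro u hu
    rw [if_neg (fun h => obs_not_unobs hb (by rwa [h] at hu))]
    exact M.pU_sum u hu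
  pO := fun x n pa =>
    if x = b then
      M.pO b (Nat.unpair n).1 (Function.update pa b (Nat.unpair (pa b)).1) *
        Kmat (M.dom c) (pa c) (Nat.unpair n).2
    else M.pO x n (Function.update pa b (Nat.unpair (pa b)).1)
  pO_nonneg := by
    intro x n pa
    split_ifs with h
    · exact mul_nonneg (M.pO_nonneg _ _ _) (le_of_lt (Kmat_pos (M.dom_ne c) _ _))
    · exact M.pO_nonneg _ _ _
  pO_sum := by
    intro x hx pa
    split_ifs with h
    · subst h
      rw [Finset.sum_image (by
        intro p hp q hq hpq
        have := Nat.pair_eq_pair.mp hpq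
        exact Prod.ext this.1 this.2)]
      rw [Finset.sum_product]
      have : ∀ β ∈ M.dom x, ∑ γ ∈ M.dom c,
          M.pO x (Nat.unpair (Nat.pair β γ)).1 (Function.update pa x (Nat.unpair (pa x)).1) *
            Kmat (M.dom c) (pa c) (Nat.unpair (Nat.pair β γ)).2
          = M.pO x β (Function.update pa x (Nat.unpair (pa x)).1) := by
        intro β hβ
        have h2 : ∀ γ ∈ M.dom c,
            M.pO x (Nat.unpair (Nat.pair β γ)).1 (Function.update pa x (Nat.unpair (pa x)).1) *
              Kmat (M.dom c) (pa c) (Nat.unpair (Nat.pair β γ)).2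
            = M.pO x β (Function.update pa x (Nat.unpair (pa x)).1) *
              Kmat (M.dom c) (pa c) γ := by
          intro γ hγ
          rw [Nat.unpair_pair]
        rw [Finset.sum_congr rfl h2, ← Finset.mul_sum, Kmat_sum (M.dom_ne c), mul_one]
      rw [Finset.sum_congr rfl this]
      exact M.pO_sum x hx _
    · exact M.pO_sum x hx _
  pO_par := by
    intro x n pa pa2 hpar
    have hupd : ∀ q, G.E q x → Function.update pa b (Nat.unpair (pa b)).1 q
        = Function.update pa2 b (Nat.unpair (pa2 b)).1 q := by
      intro q hq
      by_cases hqb : q = b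
      · rw [hqb, Function.update_self, Function.update_self, hpar b (hqb ▸ hq)]
      · rw [Function.update_of_ne hqb, Function.update_of_ne hqb]
        exact hpar q hq
    split_ifs with h
    · rw [hpar c (show G.E c x by rw [h]; exact hcb)]
      congr 1
      refine M.pO_par b _ _ _ fun q hq => ?_
      exact hupd q (by rw [h]; exact hq)
    · exact M.pO_par x n _ _ hupd

variable {M : SEM G} {b c : ν} {hb : b ∈ G.obs} {hcb : G.E c b}

lemma pipe_dom_ne' {i : ν} (hib : i ≠ b) : (M.pipe b c hb hcb).dom i = M.dom i := by
  simp [pipe, hib]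

lemma pipe_dom_b : (M.pipe b c hb hcb).dom b
    = (M.dom b ×ˢ M.dom c).image (fun p => Nat.pair p.1 p.2) := by
  simp [pipe]

lemma pipe_mem_dom_b {n : ℕ} (h : n ∈ (M.pipe b c hb hcb).dom b) :
    (Nat.unpair n).1 ∈ M.dom b ∧ (Nat.unpair n).2 ∈ M.dom c := by
  rw [pipe_dom_b, Finset.mem_image] at h
  obtain ⟨p, hp, rfl⟩ := h
  rw [Nat.unpair_pair]
  exact ⟨(Finset.mem_product.mp hp).1, (Finset.mem_product.mp hp).2⟩

lemma pipe_decode_mem {v' : ν → ℕ} (hv' : v' ∈ (M.pipe b c hb hcb).obsAssign) :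
    Function.update v' b (Nat.unpair (v' b)).1 ∈ M.obsAssign := by
  have h := mem_obsAssign_iff.mp hv'
  rw [mem_obsAssign_iff]
  constructor
  · intro i hi
    by_cases hib : i = b
    · rw [hib, Function.update_self]
      exact (pipe_mem_dom_b (h.1 b hb)).1
    · rw [Function.update_of_ne hib]
      have := h.1 i hi
      rwa [pipe_dom_ne' hib] at this
  · intro i hi
    have hib : i ≠ b := fun e => hi (e ▸ hb)
    rw [Function.update_of_ne hib]
    exact h.2 i hi

lemma pipe_uAssign : (M.pipe b c hb hcb).uAssign = M.uAssign := by
  unfold uAssign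
  congr 1
  funext i
  by_cases hi : i ∈ G.unobs
  · rw [if_pos hi, if_pos hi, pipe_dom_ne' (fun e => obs_not_unobs hb (by rwa [e] at hi))]
  · rw [if_neg hi, if_neg hi]

lemma pipe_Q (hc : c ∈ G.obs) {S : Finset ν} (hS : S ⊆ G.obs) (hbS : b ∈ S)
    {v' : ν → ℕ} (hv' : v' ∈ (M.pipe b c hb hcb).obsAssign) :
    (M.pipe b c hb hcb).Q S v'
      = Kmat (M.dom c) (v' c) (Nat.unpair (v' b)).2 *
        M.Q S (Function.update v' b (Nat.unpair (v' b)).1) := by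
  set w := Function.update v' b (Nat.unpair (v' b)).1 with hw
  have hwmem : w ∈ M.obsAssign := pipe_decode_mem hv'
  rw [Q_repr _ hS hv', Q_repr M hS hwmem, pipe_uAssign, Finset.mul_sum]
  refine Finset.sum_congr rfl fun g hg => ?_
  have h1 : G.mergeU v' g b = v' b := by
    simp only [mergeU]
    rw [if_neg (obs_not_unobs hb)]
  have h2 : G.mergeU v' g c = v' c := by
    simp only [mergeU]
    rw [if_neg (obs_not_unobs hc)]
  have hWW : Function.update (G.mergeU v' g) b (Nat.unpair (v' b)).1 = G.mergeU w g := by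
    funext i
    by_cases hib : i = b
    · rw [hib, Function.update_self]
      simp only [mergeU]
      rw [if_neg (obs_not_unobs hb), hw, Function.update_self]
    · rw [Function.update_of_ne hib]
      simp only [mergeU]
      by_cases hiu : i ∈ G.unobs
      · rw [if_pos hiu, if_pos hiu]
      · rw [if_neg hiu, if_neg hiu, hw, Function.update_of_ne hib]
  have hwb : w b = (Nat.unpair (v' b)).1 := by
    rw [hw, Function.update_self]
  have hfb : (M.pipe b c hb hcb).pO b (v' b) (G.mergeU v' g)
      = M.pO b (w b) (G.mergeU w g) * Kmat (M.dom c) (v' c) (Nat.unpair (v' b)).2 := by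
    show (if b = b then
        M.pO b (Nat.unpair (v' b)).1
          (Function.update (G.mergeU v' g) b (Nat.unpair ((G.mergeU v' g) b)).1) *
          Kmat (M.dom c) ((G.mergeU v' g) c) (Nat.unpair (v' b)).2
      else M.pO b (v' b)
        (Function.update (G.mergeU v' g) b (Nat.unpair ((G.mergeU v' g) b)).1))
      = M.pO b (w b) (G.mergeU w g) * Kmat (M.dom c) (v' c) (Nat.unpair (v' b)).2
    rw [if_pos rfl, h1, h2, hWW, hwb]
  have hfx : ∀ x ∈ S.erase b,
      (M.pipe b c hb hcb).pO x (v' x) (G.mergeU v' g) = M.pO x (w x) (G.mergeU w g) := by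
    intro x hx
    have hxb : x ≠ b := Finset.ne_of_mem_erase hx
    show (if x = b then
        M.pO b (Nat.unpair (v' x)).1
          (Function.update (G.mergeU v' g) b (Nat.unpair ((G.mergeU v' g) b)).1) *
          Kmat (M.dom c) ((G.mergeU v' g) c) (Nat.unpair (v' x)).2
      else M.pO x (v' x)
        (Function.update (G.mergeU v' g) b (Nat.unpair ((G.mergeU v' g) b)).1))
      = M.pO x (w x) (G.mergeU w g)
    rw [if_neg hxb, h1, hWW, hw, Function.update_of_ne hxb]
  have hpU : ∀ u, (M.pipe b c hb hcb).pU u = M.pU u := fun u => rfl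
  rw [← Finset.mul_prod_erase S _ hbS,
    ← Finset.mul_prod_erase S (fun x => M.pO x (w x) (G.mergeU w g)) hbS,
    hfb, Finset.prod_congr rfl hfx]
  simp only [hpU]
  ring

lemma pipe_P (hc : c ∈ G.obs) {v' : ν → ℕ}
    (hv' : v' ∈ (M.pipe b c hb hcb).obsAssign) :
    (M.pipe b c hb hcb).P v'
      = Kmat (M.dom c) (v' c) (Nat.unpair (v' b)).2 *
        M.P (Function.update v' b (Nat.unpair (v' b)).1) := by
  unfold P
  exact pipe_Q hc Finset.Subset.rfl hb hv'

lemma pipe_positive (hc : c ∈ G.obs) (hpos : M.positive) :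
    (M.pipe b c hb hcb).positive := by
  intro v' hv'
  rw [pipe_P hc hv']
  exact mul_pos (Kmat_pos (M.dom_ne c) _ _) (hpos _ (pipe_decode_mem hv'))

lemma pipe_dom_eq (hc : c ∈ G.obs) {M₁ M₂ : SEM G}
    (hdom : ∀ i ∈ G.obs, M₁.dom i = M₂.dom i) :
    ∀ i ∈ G.obs, (M₁.pipe b c hb hcb).dom i = (M₂.pipe b c hb hcb).dom i := by
  intro i hi
  by_cases hib : i = b
  · rw [hib, pipe_dom_b, pipe_dom_b, hdom b hb, hdom c hc]
  · rw [pipe_dom_ne' hib, pipe_dom_ne' hib, hdom i hi]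

lemma pipe_P_eq (hc : c ∈ G.obs) {M₁ M₂ : SEM G}
    (hdom : ∀ i ∈ G.obs, M₁.dom i = M₂.dom i)
    (hP : ∀ v ∈ M₁.obsAssign, M₁.P v = M₂.P v) :
    ∀ v' ∈ (M₁.pipe b c hb hcb).obsAssign,
      (M₁.pipe b c hb hcb).P v' = (M₂.pipe b c hb hcb).P v' := by
  intro v' hv'
  have hv'₂ : v' ∈ (M₂.pipe b c hb hcb).obsAssign := by
    rw [← obsAssign_eq (pipe_dom_eq hc hdom)]
    exact hv'
  rw [pipe_P hc hv', pipe_P hc hv'₂, ← hdom c hc,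
    hP _ (pipe_decode_mem hv')]

set_option maxHeartbeats 1000000 in
lemma pipe_Px (hc : c ∈ G.obs) {X Y' : Finset ν}
    (hbY : b ∈ Y') (hbX : b ∉ X) (hcY : c ∉ Y') (x yt : ν → ℕ)
    (hyb : yt b ∈ M.dom b) {γ : ℕ} (hγ : γ ∈ M.dom c) :
    (M.pipe b c hb hcb).Px X x Y' (Function.update yt b (Nat.pair (yt b) γ))
      = ∑ γ' ∈ M.dom c, Kmat (M.dom c) γ' γ * M.Px X x (Y' ∪ {c}) (Function.update yt c γ') := by
  have hcb' : c ≠ b := ne_of_edge hcb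
  have hbSd : b ∈ G.obs \ X := Finset.mem_sdiff.mpr ⟨hb, hbX⟩
  unfold Px
  have main : ∑ v' ∈ (M.pipe b c hb hcb).obsAssign.filter (fun v' =>
        (∀ i ∈ X, v' i = x i) ∧ (∀ i ∈ Y', v' i = Function.update yt b (Nat.pair (yt b) γ) i)),
        (M.pipe b c hb hcb).Q (G.obs \ X) v'
      = ∑ v ∈ M.obsAssign.filter (fun v => (∀ i ∈ X, v i = x i) ∧ (∀ i ∈ Y', v i = yt i)),
        Kmat (M.dom c) (v c) γ * M.Q (G.obs \ X) v := by
    refine Finset.sum_nbij' (i := fun v' => Function.update v' b (Nat.unpair (v' b)).1)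
      (j := fun v => Function.update v b (Nat.pair (yt b) γ)) ?_ ?_ ?_ ?_ ?_
    · intro v' hv'
      rw [Finset.mem_filter] at hv'
      obtain ⟨hv'mem, hXc, hYc⟩ := hv'
      have hvb : v' b = Nat.pair (yt b) γ := by
        have := hYc b hbY
        rwa [Function.update_self] at this
      rw [Finset.mem_filter]
      refine ⟨pipe_decode_mem hv'mem, ?_, ?_⟩
      · intro i hi
        rw [Function.update_of_ne (fun e => hbX (by rwa [e] at hi))]
        exact hXc i hi
      · intro i hi
        by_cases hib : i = b
        · rw [hib, Function.update_self, hvb, Nat.unpair_pair]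
        · rw [Function.update_of_ne hib]
          have := hYc i hi
          rwa [Function.update_of_ne hib] at this
    · intro v hv
      rw [Finset.mem_filter] at hv
      obtain ⟨hvmem, hXc, hYc⟩ := hv
      have hmem := mem_obsAssign_iff.mp hvmem
      rw [Finset.mem_filter]
      refine ⟨mem_obsAssign_iff.mpr ⟨?_, ?_⟩, ?_, ?_⟩
      · intro i hi
        by_cases hib : i = b
        · rw [hib, Function.update_self, pipe_dom_b, Finset.mem_image]
          exact ⟨(yt b, γ), Finset.mem_product.mpr ⟨hyb, hγ⟩, rfl⟩
        · rw [Function.update_of_ne hib, pipe_dom_ne' hib]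
          exact hmem.1 i hi
      · intro i hi
        rw [Function.update_of_ne (fun e => hi (by rwa [← e] at hb))]
        exact hmem.2 i hi
      · intro i hi
        rw [Function.update_of_ne (fun e => hbX (by rwa [e] at hi))]
        exact hXc i hi
      · intro i hi
        by_cases hib : i = b
        · rw [hib, Function.update_self, Function.update_self]
        · rw [Function.update_of_ne hib, Function.update_of_ne hib]
          exact hYc i hi
    · intro v' hv'
      rw [Finset.mem_filter] at hv'
      have hvb : v' b = Nat.pair (yt b) γ := by
        have := hv'.2.2 b hbY
        rwa [Function.update_self] at this
      rw [Function.update_idem, ← hvb]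
      exact Function.update_eq_self b v'
    · intro v hv
      rw [Finset.mem_filter] at hv
      have hvb : v b = yt b := hv.2.2 b hbY
      rw [Function.update_self, Nat.unpair_pair, Function.update_idem, ← hvb]
      exact Function.update_eq_self b v
    · intro v' hv'
      rw [Finset.mem_filter] at hv'
      obtain ⟨hv'mem, hXc, hYc⟩ := hv'
      have hvb : v' b = Nat.pair (yt b) γ := by
        have := hYc b hbY
        rwa [Function.update_self] at this
      rw [pipe_Q hc Finset.sdiff_subset hbSd hv'mem]
      rw [Function.update_of_ne hcb', hvb, Nat.unpair_pair]
  rw [main]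
  have hmaps : ∀ v ∈ M.obsAssign.filter (fun v => (∀ i ∈ X, v i = x i) ∧ (∀ i ∈ Y', v i = yt i)),
      v c ∈ M.dom c := by
    intro v hv
    exact (mem_obsAssign_iff.mp (Finset.mem_filter.mp hv).1).1 c hc
  rw [← Finset.sum_fiberwise_of_maps_to hmaps (fun v => Kmat (M.dom c) (v c) γ * M.Q (G.obs \ X) v)]
  refine Finset.sum_congr rfl fun γ' hγ' => ?_
  have hterm : ∀ v ∈ (M.obsAssign.filter (fun v => (∀ i ∈ X, v i = x i) ∧
      (∀ i ∈ Y', v i = yt i))).filter (fun v => v c = γ'),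
      Kmat (M.dom c) (v c) γ * M.Q (G.obs \ X) v
        = Kmat (M.dom c) γ' γ * M.Q (G.obs \ X) v := by
    intro v hv
    rw [(Finset.mem_filter.mp hv).2]
  rw [Finset.sum_congr rfl hterm, ← Finset.mul_sum]
  congr 1
  have hset : (M.obsAssign.filter (fun v => (∀ i ∈ X, v i = x i) ∧
      (∀ i ∈ Y', v i = yt i))).filter (fun v => v c = γ')
      = M.obsAssign.filter (fun v => (∀ i ∈ X, v i = x i) ∧
        (∀ i ∈ Y' ∪ {c}, v i = Function.update yt c γ' i)) := by
    rw [Finset.filter_filter]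
    refine Finset.filter_congr fun v hv => ?_
    constructor
    · rintro ⟨⟨h1, h2⟩, h3⟩
      refine ⟨h1, fun i hi => ?_⟩
      rcases Finset.mem_union.mp hi with hi | hi
      · rw [Function.update_of_ne (fun e => hcY (by rwa [e] at hi))]
        exact h2 i hi
      · rw [Finset.mem_singleton] at hi
        rw [hi, Function.update_self]
        exact h3
    · rintro ⟨h1, h2⟩
      refine ⟨⟨h1, fun i hi => ?_⟩, ?_⟩
      · have := h2 i (Finset.mem_union_left _ hi)
        rwa [Function.update_of_ne (fun e => hcY (by rwa [e] at hi))] at this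
      · have := h2 c (Finset.mem_union_right _ (Finset.mem_singleton_self c))
        rwa [Function.update_self] at this
  rw [hset]

end Pipe

end SEM

open SEM in
lemma step_identifiable {X Y' : Finset ν} {b c : ν} (hb : b ∈ G.obs) (hc : c ∈ G.obs)
    (hcb : G.E c b) (hbY : b ∈ Y') (hbX : b ∉ X) (hcY : c ∉ Y') (hcX : c ∉ X)
    (hid : Identifiable G X Y') : Identifiable G X (Y' ∪ {c}) := by
  intro M₁ M₂ h1 h2 hdom hP x yt hx hy
  have hyb : yt b ∈ M₁.dom b := hy b (Finset.mem_union_left _ hbY)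
  have hyc : yt c ∈ M₁.dom c := hy c (Finset.mem_union_right _ (Finset.mem_singleton_self c))
  have hyb₂ : yt b ∈ M₂.dom b := by rw [← hdom b hb]; exact hyb
  have key : ∀ γ ∈ M₁.dom c,
      ∑ γ' ∈ M₁.dom c, Kmat (M₁.dom c) γ' γ *
        M₁.Px X x (Y' ∪ {c}) (Function.update yt c γ')
      = ∑ γ' ∈ M₁.dom c, Kmat (M₁.dom c) γ' γ *
        M₂.Px X x (Y' ∪ {c}) (Function.update yt c γ') := by
    intro γ hγ
    have hγ₂ : γ ∈ M₂.dom c := by rw [← hdom c hc]; exact hγ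
    have hx' : ∀ i ∈ X, x i ∈ (M₁.pipe b c hb hcb).dom i := by
      intro i hi
      rw [pipe_dom_ne' (fun e => hbX (by rwa [e] at hi))]
      exact hx i hi
    have hy' : ∀ i ∈ Y', Function.update yt b (Nat.pair (yt b) γ) i
        ∈ (M₁.pipe b c hb hcb).dom i := by
      intro i hi
      by_cases hib : i = b
      · rw [hib, Function.update_self, pipe_dom_b, Finset.mem_image]
        exact ⟨(yt b, γ), Finset.mem_product.mpr ⟨hyb, hγ⟩, rfl⟩
      · rw [Function.update_of_ne hib, pipe_dom_ne' hib]
        exact hy i (Finset.mem_union_left _ hi)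
    have happ := hid (M₁.pipe b c hb hcb) (M₂.pipe b c hb hcb)
      (pipe_positive hc h1) (pipe_positive hc h2) (pipe_dom_eq hc hdom)
      (pipe_P_eq hc hdom hP) x (Function.update yt b (Nat.pair (yt b) γ)) hx' hy'
    rw [pipe_Px hc hbY hbX hcY x yt hyb hγ,
      pipe_Px hc hbY hbX hcY x yt hyb₂ hγ₂, ← hdom c hc] at happ
    exact happ
  have hdec := Kmat_decode (M₁.dom_ne c)
    (fun γ' => M₁.Px X x (Y' ∪ {c}) (Function.update yt c γ'))
    (fun γ' => M₂.Px X x (Y' ∪ {c}) (Function.update yt c γ')) key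
  have hfin := hdec (yt c) hyc
  simpa only [Function.update_eq_self] using hfin

lemma anc_identifiable {X Y : Finset ν} (hX : X ⊆ G.obs) (hY : Y ⊆ G.obs \ X)
    (hid : Identifiable G X Y) : Identifiable G X (G.ancIn (G.obs \ X) Y) := by
  suffices h : ∀ (n : ℕ) (Y' : Finset ν), Y ⊆ Y' → Y' ⊆ G.ancIn (G.obs \ X) Y →
      ((G.ancIn (G.obs \ X) Y) \ Y').card = n → Identifiable G X Y' →
      Identifiable G X (G.ancIn (G.obs \ X) Y) by
    exact h _ Y subset_rfl (subset_ancIn' hY) rfl hid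
  intro n
  induction n with
  | zero =>
    intro Y' h1 h2 hcard hidY
    have h3 : G.ancIn (G.obs \ X) Y ⊆ Y' := by
      rw [← Finset.sdiff_eq_empty_iff_subset, ← Finset.card_eq_zero]
      exact hcard
    have heq : Y' = G.ancIn (G.obs \ X) Y := Finset.Subset.antisymm h2 h3
    rwa [heq] at hidY
  | succ k ih =>
    intro Y' h1 h2 hcard hidY
    have hne : ((G.ancIn (G.obs \ X) Y) \ Y').Nonempty := by
      rw [← Finset.card_pos, hcard]; omega
    obtain ⟨a, ha⟩ := hne
    have haA := (Finset.mem_sdiff.mp ha).1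
    have haY' := (Finset.mem_sdiff.mp ha).2
    obtain ⟨haS, y0, hy0, hpath⟩ := Finset.mem_filter.mp haA
    have hy0Y' : y0 ∈ Y' := h1 hy0
    obtain ⟨c0, b0, hc0Y, hb0Y, hedge, -⟩ := exists_boundary hpath hy0Y' haY'
    obtain ⟨hc0S, hb0S, hE⟩ := hedge
    have hb0A : b0 ∈ G.ancIn (G.obs \ X) Y := h2 hb0Y
    obtain ⟨-, y1, hy1, hpath3⟩ := Finset.mem_filter.mp hb0A
    have hc0A : c0 ∈ G.ancIn (G.obs \ X) Y :=
      Finset.mem_filter.mpr ⟨hc0S, y1, hy1, Relation.ReflTransGen.head ⟨hc0S, hb0S, hE⟩ hpath3⟩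
    have hb0obs : b0 ∈ G.obs := (Finset.mem_sdiff.mp hb0S).1
    have hc0obs : c0 ∈ G.obs := (Finset.mem_sdiff.mp hc0S).1
    have hb0X : b0 ∉ X := (Finset.mem_sdiff.mp hb0S).2
    have hc0X : c0 ∉ X := (Finset.mem_sdiff.mp hc0S).2
    have hstep := step_identifiable hb0obs hc0obs hE hb0Y hb0X hc0Y hc0X hidY
    refine ih (Y' ∪ {c0}) (h1.trans Finset.subset_union_left)
      (Finset.union_subset h2 (by simpa using hc0A)) ?_ hstep
    have hset : (G.ancIn (G.obs \ X) Y) \ (Y' ∪ {c0})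
        = ((G.ancIn (G.obs \ X) Y) \ Y').erase c0 := by
      ext t
      simp only [Finset.mem_sdiff, Finset.mem_erase, Finset.mem_union, Finset.mem_singleton]
      tauto
    rw [hset, Finset.card_erase_of_mem (Finset.mem_sdiff.mpr ⟨hc0A, hc0Y⟩), hcard]
    omega

end CausalGraph

end Machinery

open CGaux CausalGraph CausalGraph.SEM

set_option maxHeartbeats 1000000 in
/-- Proposition 1, Huang–Valtorta. The causal effect of `X` on `Y` is
identifiable from `G` iff `Q[Anc_Y(G_{V∖X})]` is identifiable from `G`. -/
theorem id_iff_id_ancestors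
    {ν : Type} [Fintype ν] [DecidableEq ν] (G : CausalGraph ν)
    (X Y : Finset ν) (hX : X ⊆ G.obs) (hY : Y ⊆ G.obs) (hXY : Disjoint X Y) :
    G.Identifiable X Y ↔ G.QIdentifiable (G.ancIn (G.obs \ X) Y) := by
  have hYS : Y ⊆ G.obs \ X :=
    fun y hy => Finset.mem_sdiff.mpr ⟨hY hy, Finset.disjoint_right.mp hXY hy⟩
  have hAS : G.ancIn (G.obs \ X) Y ⊆ G.obs \ X := ancIn_subset'
  have hAobs : G.ancIn (G.obs \ X) Y ⊆ G.obs :=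
    fun a ha => (Finset.mem_sdiff.mp (hAS ha)).1
  have hanc := ancIn_closed' (G := G) (X := X) (Y := Y)
  constructor
  · intro hid
    have hidA : Identifiable G X (G.ancIn (G.obs \ X) Y) := anc_identifiable hX hYS hid
    intro M₁ M₂ h1 h2 hdom hP x' a hx' ha
    set A := G.ancIn (G.obs \ X) Y with hAdef
    set vh : ν → ℕ := fun i => if i ∈ G.obs then (if i ∈ A then a i else x' i) else 0 with hvhdef
    have hvhmem : vh ∈ M₁.obsAssign := by
      rw [mem_obsAssign_iff]
      constructor
      · intro i hi
        simp only [hvhdef]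
        rw [if_pos hi]
        by_cases hiA : i ∈ A
        · rw [if_pos hiA]; exact ha i hiA
        · rw [if_neg hiA]; exact hx' i (Finset.mem_sdiff.mpr ⟨hi, hiA⟩)
      · intro i hi
        simp only [hvhdef]
        rw [if_neg hi]
    have hvhmem₂ : vh ∈ M₂.obsAssign := by
      rw [← obsAssign_eq hdom]; exact hvhmem
    have hvhdom : ∀ i ∈ G.obs, vh i ∈ M₁.dom i := (mem_obsAssign_iff.mp hvhmem).1
    have hvhdom₂ : ∀ i ∈ G.obs, vh i ∈ M₂.dom i := (mem_obsAssign_iff.mp hvhmem₂).1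
    have hxeq : ∀ i ∈ G.obs \ A, x' i = vh i := by
      intro i hi
      obtain ⟨hio, hiA⟩ := Finset.mem_sdiff.mp hi
      simp only [hvhdef]
      rw [if_pos hio, if_neg hiA]
    have hyeq : ∀ i ∈ A, a i = vh i := by
      intro i hi
      simp only [hvhdef]
      rw [if_pos (hAobs hi), if_pos hi]
    have e₁ : M₁.Px (G.obs \ A) x' A a = M₁.Q A vh := by
      rw [Px_congr M₁ hxeq hyeq, Px_self M₁ hAobs hvhmem]
    have e₂ : M₂.Px (G.obs \ A) x' A a = M₂.Q A vh := by
      rw [Px_congr M₂ hxeq hyeq, Px_self M₂ hAobs hvhmem₂]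
    rw [e₁, e₂]
    have hfam : ∀ (M : SEM G), (∀ i ∈ G.obs, vh i ∈ M.dom i) →
        M.pinFam ((X ∪ A) ∪ ((G.obs \ X) \ A)) vh = fun i => ({vh i} : Finset ℕ) := by
      intro M hdomM
      funext i
      unfold SEM.pinFam
      by_cases hiP : i ∈ (X ∪ A) ∪ ((G.obs \ X) \ A)
      · rw [if_pos hiP]
      · rw [if_neg hiP]
        have hio : i ∉ G.obs := by
          intro hio
          apply hiP
          by_cases hiX : i ∈ X
          · exact Finset.mem_union_left _ (Finset.mem_union_left _ hiX)
          · by_cases hiA : i ∈ A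
            · exact Finset.mem_union_left _ (Finset.mem_union_right _ hiA)
            · exact Finset.mem_union_right _
                (Finset.mem_sdiff.mpr ⟨Finset.mem_sdiff.mpr ⟨hio, hiX⟩, hiA⟩)
        rw [if_neg hio]
        have h0 : vh i = 0 := by
          simp only [hvhdef]
          rw [if_neg hio]
        rw [h0]
    have hQP₁ : M₁.Px X vh A vh = M₁.Q A vh := by
      rw [Px_eq_sum_Q M₁ hX Finset.Subset.rfl hAS hanc hvhdom, hfam M₁ hvhdom,
        sum_piFinset_singleton]
    have hQP₂ : M₂.Px X vh A vh = M₂.Q A vh := by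
      rw [Px_eq_sum_Q M₂ hX Finset.Subset.rfl hAS hanc hvhdom₂, hfam M₂ hvhdom₂,
        sum_piFinset_singleton]
    rw [← hQP₁, ← hQP₂]
    exact hidA M₁ M₂ h1 h2 hdom hP vh vh (fun i hi => hvhdom i (hX hi))
      (fun i hi => hvhdom i (hAobs hi))
  · intro hq
    intro M₁ M₂ h1 h2 hdom hP x y hx hy
    set A := G.ancIn (G.obs \ X) Y with hAdef
    set z₀ : ν → ℕ := fun i => if i ∈ X then x i
      else if i ∈ Y then y i else (M₁.dom_ne i).choose with hz₀def
    have hz₀ : ∀ i ∈ G.obs, z₀ i ∈ M₁.dom i := by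
      intro i hi
      simp only [hz₀def]
      split_ifs with ha hb
      · exact hx i ha
      · exact hy i hb
      · exact (M₁.dom_ne i).choose_spec
    have hz₀₂ : ∀ i ∈ G.obs, z₀ i ∈ M₂.dom i := fun i hi => by
      rw [← hdom i hi]; exact hz₀ i hi
    have hxe : ∀ i ∈ X, x i = z₀ i := by
      intro i hi
      simp only [hz₀def]
      rw [if_pos hi]
    have hye : ∀ i ∈ Y, y i = z₀ i := by
      intro i hi
      simp only [hz₀def]
      rw [if_neg (Finset.disjoint_left.mp hXY.symm hi), if_pos hi]
    have hYobs : Y ⊆ G.obs := hY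
    rw [Px_congr M₁ hxe hye, Px_congr M₂ hxe hye,
      Px_eq_sum_Q M₁ hX (subset_ancIn' hYS) hAS hanc hz₀,
      Px_eq_sum_Q M₂ hX (subset_ancIn' hYS) hAS hanc hz₀₂]
    have hfam : M₁.pinFam ((X ∪ Y) ∪ ((G.obs \ X) \ A)) z₀
        = M₂.pinFam ((X ∪ Y) ∪ ((G.obs \ X) \ A)) z₀ := by
      funext i
      unfold SEM.pinFam
      by_cases hiP : i ∈ (X ∪ Y) ∪ ((G.obs \ X) \ A)
      · rw [if_pos hiP, if_pos hiP]
      · rw [if_neg hiP, if_neg hiP]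
        by_cases hio : i ∈ G.obs
        · rw [if_pos hio, if_pos hio, hdom i hio]
        · rw [if_neg hio, if_neg hio]
    rw [← hfam]
    have hPobs : (X ∪ Y) ∪ ((G.obs \ X) \ A) ⊆ G.obs :=
      Finset.union_subset (Finset.union_subset hX hYobs)
        (Finset.Subset.trans Finset.sdiff_subset Finset.sdiff_subset)
    refine Finset.sum_congr rfl fun v hv => ?_
    have hvmem : v ∈ M₁.obsAssign := pinFam_mem_obsAssign hPobs hz₀ hv
    have hvmem₂ : v ∈ M₂.obsAssign := by rw [← obsAssign_eq hdom]; exact hvmem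
    rw [← Px_self M₁ hAobs hvmem, ← Px_self M₂ hAobs hvmem₂]
    exact hq M₁ M₂ h1 h2 hdom hP v v
      (fun i hi => (mem_obsAssign_iff.mp hvmem).1 i (Finset.mem_sdiff.mp hi).1)
      (fun i hi => (mem_obsAssign_iff.mp hvmem).1 i (hAobs hi))
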